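/- Let n ≥ 4, let d and a(1), ..., a(n−1) be integers with 0 < a(i) < d for every i and Σ_{i=1}^{n−1} a(i) < d, let a = (a(1), ..., a(n−1), d)^T ∈ ℤ^n, and let K be the convex hull in ℝ^n of {0, e_1, ..., e_{n−1}, a}. Let C = ⋃_{i≥1} (iK ∩ ℤ^n) be the union over all positive integers i of the lattice points of iK. Then the all-ones vector 𝟏 ∈ C cannot be written as 𝟏 = y + z with y, z ∈ C both nonzero; i.e., 𝟏 is an atom of the additive monoid generated, and in particular 𝟏 ∉ ((n−2)K ∩ ℤ^n) + (K ∩ ℤ^n). -/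

import Mathlib

open Pointwise

/-- The set of lattice points (points with integer coordinates) of `ℝ^n`. -/
def latticePoints (n : ℕ) : Set (Fin n → ℝ) := {x | ∀ i, ∃ z : ℤ, x i = (z : ℝ)}

set_option maxHeartbeats 1000000 in
/-- With `K` the convex hull of `{0, e_1, …, e_{n-1}, a}` as in Example 4 (`n ≥ 4`,
`0 < a i < d` for `i < n-1`, `∑_{i<n-1} a i < d`, last coordinate of `a` equal to `d`),
let `C = ⋃_{i ≥ 1} (iK ∩ ℤ^n)`.  Then the all-ones vector `𝟏` belongs to `C`, it cannot be
written as `y + z` with `y, z ∈ C` both nonzero (it is an atom), and in particular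
`𝟏 ∉ ((n-2)K ∩ ℤ^n) + (K ∩ ℤ^n)`. -/
theorem example4_atom (n : ℕ) (hn : 4 ≤ n) (d : ℤ) (a : Fin n → ℤ)
    (ha : ∀ i : Fin n, (i : ℕ) < n - 1 → 0 < a i ∧ a i < d)
    (hlast : a ⟨n - 1, by omega⟩ = d)
    (hsum : ∑ i ∈ Finset.univ.filter (fun i : Fin n => (i : ℕ) < n - 1), a i < d)
    (S : Set (Fin n → ℝ))
    (hS : S = {0} ∪ {x | ∃ i : Fin n, (i : ℕ) < n - 1 ∧ x = Pi.single i 1} ∪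
      {fun i => (a i : ℝ)})
    (K : Set (Fin n → ℝ)) (hK : K = convexHull ℝ S)
    (C : Set (Fin n → ℝ))
    (hC : C = ⋃ (i : ℕ) (_ : 1 ≤ i), ((i : ℝ) • K ∩ latticePoints n)) :
    (fun _ => (1 : ℝ)) ∈ C ∧
    (∀ y z : Fin n → ℝ, y ∈ C → z ∈ C → y + z = (fun _ => (1 : ℝ)) →
      y = 0 ∨ z = 0) ∧
    (fun _ => (1 : ℝ)) ∉
      (((n - 2 : ℕ) : ℝ) • K ∩ latticePoints n) + (K ∩ latticePoints n) := by
  have hnn : (4:ℝ) ≤ (n:ℝ) := by exact_mod_cast hn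
  have hi0 : ((⟨0, by omega⟩ : Fin n) : ℕ) < n - 1 := by show (0:ℕ) < n - 1; omega
  have hd2 : 2 ≤ d := by have := ha ⟨0, by omega⟩ hi0; omega
  have hdR : (2:ℝ) ≤ (d:ℝ) := by exact_mod_cast hd2
  have hdpos : (0:ℝ) < (d:ℝ) := by linarith
  set lst : Fin n := ⟨n - 1, by omega⟩ with hlstdef
  have hlstv : (lst : ℕ) = n - 1 := rfl
  have halst : a lst = d := hlast
  set F : Finset (Fin n) := Finset.univ.filter (fun i : Fin n => (i : ℕ) < n - 1) with hF
  have hmemF : ∀ i : Fin n, i ∈ F ↔ (i:ℕ) < n - 1 := by intro i; simp [hF]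
  have hlstF : lst ∉ F := by
    intro h
    have := (hmemF lst).1 h
    omega
  have huniv : (Finset.univ : Finset (Fin n)) = insert lst F := by
    ext i
    simp only [Finset.mem_univ, Finset.mem_insert, true_iff, hF, Finset.mem_filter,
      Fin.ext_iff, hlstv, true_and]
    have := i.isLt
    omega
  have hcardn : F.card = n - 1 := by
    have h1 : (Finset.univ : Finset (Fin n)).card = n := by simp
    rw [huniv, Finset.card_insert_of_notMem hlstF] at h1
    omega
  have hcard : (F.card : ℝ) = (n:ℝ) - 1 := by
    rw [hcardn, Nat.cast_sub (by omega : 1 ≤ n), Nat.cast_one]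
  set A : ℤ := ∑ i ∈ F, a i with hA
  have hA1 : 1 ≤ A := by
    have h0 : (⟨0, by omega⟩ : Fin n) ∈ F := (hmemF _).2 hi0
    have h2 := Finset.single_le_sum (f := a)
      (fun i hi => le_of_lt (ha i ((hmemF i).1 hi)).1) h0
    have ha0 := (ha ⟨0, by omega⟩ hi0).1
    omega
  have hAd : A < d := hsum
  have hARd : (A:ℝ) ≤ (d:ℝ) - 1 := by
    have : A ≤ d - 1 := by omega
    exact_mod_cast this
  -- Halfspace bounds
  have hSsub : ∀ (f : (Fin n → ℝ) → ℝ) (r : ℝ), (∀ s ∈ S, f s ≤ r) → IsLinearMap ℝ f →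
      ∀ x ∈ K, f x ≤ r := by
    intro f r hfS hf x hx
    rw [hK] at hx
    exact convexHull_min hfS (convex_halfSpace_le hf r) hx
  have hble : ∀ (f : (Fin n → ℝ) → ℝ) (r : ℝ), (∀ s ∈ S, f s ≤ r) → IsLinearMap ℝ f →
      ∀ (m : ℕ) (x : Fin n → ℝ), x ∈ (m : ℝ) • K → f x ≤ (m:ℝ) * r := by
    intro f r hfS hf m x hx
    rw [Set.mem_smul_set] at hx
    obtain ⟨k, hk, rfl⟩ := hx
    have h1 : f k ≤ r := hSsub f r hfS hf k hk
    have h2 : f ((m:ℝ) • k) = (m:ℝ) * f k := by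
      rw [hf.map_smul]; simp [smul_eq_mul]
    rw [h2]
    exact mul_le_mul_of_nonneg_left h1 (Nat.cast_nonneg m)
  have hbge : ∀ (f : (Fin n → ℝ) → ℝ), (∀ s ∈ S, 0 ≤ f s) → IsLinearMap ℝ f →
      ∀ (m : ℕ) (x : Fin n → ℝ), x ∈ (m : ℝ) • K → 0 ≤ f x := by
    intro f hfS hf m x hx
    rw [Set.mem_smul_set] at hx
    obtain ⟨k, hk, rfl⟩ := hx
    have h1 : 0 ≤ f k := by
      rw [hK] at hk
      exact convexHull_min hfS (convex_halfSpace_ge hf 0) hk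
    have h2 : f ((m:ℝ) • k) = (m:ℝ) * f k := by
      rw [hf.map_smul]; simp [smul_eq_mul]
    rw [h2]
    exact mul_nonneg (Nat.cast_nonneg m) h1
  have hSelim : ∀ s ∈ S, s = 0 ∨ (∃ i : Fin n, (i:ℕ) < n - 1 ∧ s = Pi.single i 1) ∨
      s = fun i => (a i : ℝ) := by
    intro s hs
    rw [hS] at hs
    rcases hs with (hs | hs) | hs
    · exact Or.inl hs
    · exact Or.inr (Or.inl hs)
    · exact Or.inr (Or.inr hs)
  have hlstne : ∀ i : Fin n, (i:ℕ) < n - 1 → lst ≠ i := by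
    intro i hi h
    rw [h] at hlstv
    omega
  -- functional f0 : x ↦ x lst
  have hf0lin : IsLinearMap ℝ (fun x : Fin n → ℝ => x lst) := ⟨fun x y => rfl, fun c x => rfl⟩
  have hf0S : ∀ s ∈ S, 0 ≤ (fun x : Fin n → ℝ => x lst) s := by
    intro s hs
    rcases hSelim s hs with h | ⟨i, hi, rfl⟩ | h
    · rw [h]; simp
    · simp only
      rw [Pi.single_eq_of_ne (hlstne i hi)]
    · rw [h]; simp only
      rw [halst]
      exact hdpos.le
  -- functionals fI i : x ↦ d * x i - a i * x lst
  have hfIlin : ∀ i0 : Fin n,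
      IsLinearMap ℝ (fun x : Fin n → ℝ => (d:ℝ) * x i0 - (a i0 : ℝ) * x lst) := by
    intro i0
    constructor
    · intro x y; simp only [Pi.add_apply]; ring
    · intro c x; simp only [Pi.smul_apply, smul_eq_mul]; ring
  have hfIS : ∀ i0 : Fin n, (i0:ℕ) < n - 1 →
      ∀ s ∈ S, 0 ≤ (fun x : Fin n → ℝ => (d:ℝ) * x i0 - (a i0:ℝ) * x lst) s := by
    intro i0 hi0' s hs
    rcases hSelim s hs with h | ⟨i, hi, rfl⟩ | h
    · rw [h]; simp
    · simp only
      rw [Pi.single_eq_of_ne (hlstne i hi), Pi.single_apply]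
      split
      · simp
        omega
      · simp
    · rw [h]; simp only
      rw [halst]
      have : (d:ℝ) * (a i0:ℝ) - (a i0:ℝ) * (d:ℝ) = 0 := by ring
      linarith
  -- functional g : x ↦ ∑_{j∈F} x j + ((1-A)/d) x lst
  have hglin : IsLinearMap ℝ
      (fun x : Fin n → ℝ => (∑ j ∈ F, x j) + ((1 - (A:ℝ))/(d:ℝ)) * x lst) := by
    constructor
    · intro x y
      simp only [Pi.add_apply, Finset.sum_add_distrib]
      ring
    · intro c x
      simp only [Pi.smul_apply, smul_eq_mul, mul_add, Finset.mul_sum]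
      ring
  have hgS : ∀ s ∈ S, (fun x : Fin n → ℝ => (∑ j ∈ F, x j) + ((1 - (A:ℝ))/(d:ℝ)) * x lst) s ≤ 1 := by
    intro s hs
    rcases hSelim s hs with h | ⟨i, hi, rfl⟩ | h
    · rw [h]; simp
    · simp only
      have h1 : (Pi.single i 1 : Fin n → ℝ) lst = 0 := Pi.single_eq_of_ne (hlstne i hi) 1
      have hiF : i ∈ F := (hmemF i).2 hi
      have h2 : ∑ j ∈ F, (Pi.single i 1 : Fin n → ℝ) j = 1 := by
        simp only [Pi.single_apply]
        rw [Finset.sum_ite_eq' F i (fun _ => (1:ℝ))]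
        simp [hiF]
      rw [h1, h2]
      simp
    · rw [h]; simp only
      have h2 : ∑ j ∈ F, ((a j : ℤ):ℝ) = (A:ℝ) := by rw [hA]; push_cast; rfl
      rw [h2, halst, div_mul_cancel₀ _ hdpos.ne']
      linarith
  -- 0 ∈ K, convexity
  have h0S : (0 : Fin n → ℝ) ∈ S := by rw [hS]; left; left; rfl
  have h0K : (0 : Fin n → ℝ) ∈ K := hK ▸ subset_convexHull ℝ S h0S
  have hKconv : Convex ℝ K := hK ▸ convex_convexHull ℝ S
  -- the point (1/(n-1)) 𝟏 lies in K
  set D : ℝ := (d:ℝ) * ((n:ℝ) - 1) with hD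
  have hDpos : 0 < D := by rw [hD]; nlinarith
  set w : Fin n → ℝ := fun i => if (i:ℕ) < n - 1 then ((d:ℝ) - (a i:ℝ))/D else 1/D with hw
  set zz : Fin n → (Fin n → ℝ) :=
    fun i => if (i:ℕ) < n - 1 then Pi.single i 1 else fun j => (a j : ℝ) with hzz
  have hwpos : ∀ i, 0 < w i := by
    intro i
    rw [hw]
    dsimp only
    split
    · next hi =>
      have h1 := (ha i hi).2
      have h2 : (a i:ℝ) < (d:ℝ) := by exact_mod_cast h1
      apply div_pos (by linarith) hDpos
    · exact div_pos one_pos hDpos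
  have hzzS : ∀ i, zz i ∈ S := by
    intro i
    rw [hzz]
    dsimp only
    split
    · next hi => rw [hS]; left; right; exact ⟨i, hi, rfl⟩
    · rw [hS]; right; rfl
  set s₀ : ℝ := ∑ i, w i with hs₀
  have hs₀pos : 0 < s₀ :=
    Finset.sum_pos (fun i _ => hwpos i) ⟨lst, Finset.mem_univ lst⟩
  have hwF : ∀ i ∈ F, w i = ((d:ℝ) - (a i:ℝ))/D := by
    intro i hi
    rw [hw]
    simp [(hmemF i).1 hi]
  have hwlst : w lst = 1/D := by
    rw [hw]
    simp [hlstv]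
  have hsumF : ∑ i ∈ F, ((d:ℝ) - (a i:ℝ)) = ((n:ℝ) - 1) * (d:ℝ) - (A:ℝ) := by
    rw [Finset.sum_sub_distrib, Finset.sum_const, nsmul_eq_mul, hcard, hA]
    push_cast
    ring
  have hs₀val : s₀ = (((n:ℝ)-1)*(d:ℝ) - (A:ℝ) + 1)/D := by
    rw [hs₀, huniv, Finset.sum_insert hlstF, hwlst, Finset.sum_congr rfl hwF,
      ← Finset.sum_div, hsumF]
    ring
  have hs₀le : s₀ ≤ 1 := by
    rw [hs₀val, div_le_one hDpos, hD]
    have hAR1 : (1:ℝ) ≤ (A:ℝ) := by exact_mod_cast hA1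
    nlinarith
  have hn1ne : ((n:ℝ) - 1) ≠ 0 := by linarith
  have hDne : (d:ℝ) * ((n:ℝ) - 1) ≠ 0 := by rw [← hD]; exact hDpos.ne'
  have hpj : ∀ j : Fin n, (∑ i, w i • zz i) j = 1/((n:ℝ)-1) := by
    intro j
    rw [Finset.sum_apply]
    by_cases hj : (j:ℕ) < n - 1
    · have hstep : ∀ i ∈ F, (w i • zz i) j = if j = i then ((d:ℝ) - (a i:ℝ))/D else 0 := by
        intro i hi
        have hi' := (hmemF i).1 hi
        rw [Pi.smul_apply, smul_eq_mul, hwF i hi, hzz]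
        dsimp only
        rw [if_pos hi', Pi.single_apply]
        by_cases hji : j = i <;> simp [hji]
      have hlstterm : (w lst • zz lst) j = (a j : ℝ)/D := by
        rw [Pi.smul_apply, smul_eq_mul, hwlst, hzz]
        dsimp only
        rw [if_neg (by omega)]
        ring
      rw [huniv, Finset.sum_insert hlstF, hlstterm, Finset.sum_congr rfl hstep,
        Finset.sum_ite_eq F j (fun i => ((d:ℝ) - (a i:ℝ))/D)]
      rw [if_pos ((hmemF j).2 hj), ← add_div]
      have hnum : (a j:ℝ) + ((d:ℝ) - (a j:ℝ)) = (d:ℝ) := by ring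
      rw [hnum, hD, div_eq_div_iff hDne hn1ne]
      ring
    · have hjl : j = lst := by
        apply Fin.ext
        have := j.isLt
        omega
      rw [hjl]
      have hlstterm : (w lst • zz lst) lst = (d:ℝ)/D := by
        rw [Pi.smul_apply, smul_eq_mul, hwlst, hzz]
        dsimp only
        rw [if_neg (by omega), halst]
        ring
      have hstep : ∀ i ∈ F, (w i • zz i) lst = 0 := by
        intro i hi
        have hi' := (hmemF i).1 hi
        rw [Pi.smul_apply, smul_eq_mul, hzz]
        dsimp only
        rw [if_pos hi', Pi.single_eq_of_ne (hlstne i hi')]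
        ring
      rw [huniv, Finset.sum_insert hlstF, hlstterm, Finset.sum_congr rfl hstep]
      rw [Finset.sum_const_zero, add_zero, hD, div_eq_div_iff hDne hn1ne]
      ring
  have hcmK : Finset.univ.centerMass w zz ∈ K := by
    rw [hK]
    exact Finset.centerMass_mem_convexHull Finset.univ (fun i _ => (hwpos i).le)
      (by rw [← hs₀]; exact hs₀pos) (fun i _ => hzzS i)
  have hq : s₀ • Finset.univ.centerMass w zz = ∑ i, w i • zz i := by
    rw [Finset.centerMass, ← hs₀, smul_smul, mul_inv_cancel₀ hs₀pos.ne', one_smul]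
  have hpK : (∑ i, w i • zz i) ∈ K := by
    rw [← hq]
    have h1 : s₀ • Finset.univ.centerMass w zz + (1 - s₀) • (0 : Fin n → ℝ) ∈ K :=
      hKconv hcmK h0K hs₀pos.le (by linarith) (by ring)
    simpa using h1
  have hone : (fun _ : Fin n => (1:ℝ)) = (((n-1:ℕ)):ℝ) • (∑ i, w i • zz i) := by
    funext j
    rw [Pi.smul_apply, smul_eq_mul, hpj j, Nat.cast_sub (by omega : 1 ≤ n), Nat.cast_one,
      mul_one_div, div_self hn1ne]
  have hmem1 : (fun _ : Fin n => (1:ℝ)) ∈ C := by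
    rw [hC]
    simp only [Set.mem_iUnion]
    refine ⟨n - 1, by omega, ?_, ?_⟩
    · rw [hone]
      exact Set.smul_mem_smul_set hpK
    · intro i
      exact ⟨1, by norm_num⟩
  -- integer constraints for members of mK ∩ ℤⁿ
  have hvec : ∀ (m : ℕ) (x : Fin n → ℝ) (X : Fin n → ℤ), x ∈ (m:ℝ) • K →
      (∀ i, x i = (X i:ℝ)) →
      0 ≤ X lst ∧ (∀ i : Fin n, (i:ℕ) < n - 1 → a i * X lst ≤ d * X i) ∧ (∀ i, 0 ≤ X i) := by
    intro m x X hx hX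
    have h0 : 0 ≤ x lst := hbge _ hf0S hf0lin m x hx
    have h0' : 0 ≤ X lst := by
      rw [hX lst] at h0
      exact_mod_cast h0
    have h1 : ∀ i : Fin n, (i:ℕ) < n - 1 → a i * X lst ≤ d * X i := by
      intro i hi
      have h2 := hbge _ (hfIS i hi) (hfIlin i) m x hx
      rw [hX i, hX lst] at h2
      have h3 : (a i:ℝ) * (X lst:ℝ) ≤ (d:ℝ) * (X i:ℝ) := by linarith
      exact_mod_cast h3
    refine ⟨h0', h1, ?_⟩
    intro i
    by_cases hi : (i:ℕ) < n - 1
    · have h2 := h1 i hi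
      have h3 : 0 ≤ a i * X lst := mul_nonneg (ha i hi).1.le h0'
      have h4 : 0 ≤ d * X i := le_trans h3 h2
      have h5 : d * 0 ≤ d * X i := by rw [mul_zero]; exact h4
      exact le_of_mul_le_mul_left h5 (by omega)
    · have h6 : i = lst := by
        apply Fin.ext
        have := i.isLt
        omega
      rw [h6]
      exact h0'
  -- the atom property
  have hatom : ∀ y z : Fin n → ℝ, y ∈ C → z ∈ C → y + z = (fun _ => (1:ℝ)) →
      y = 0 ∨ z = 0 := by
    intro y z hy hz hadd
    rw [hC] at hy hz
    simp only [Set.mem_iUnion, Set.mem_inter_iff] at hy hz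
    obtain ⟨p, hp1, hyK, hyL⟩ := hy
    obtain ⟨q, hq1, hzK, hzL⟩ := hz
    choose Y hY using hyL
    choose Z hZ using hzL
    obtain ⟨hY0, hYc, hYn⟩ := hvec p y Y hyK hY
    obtain ⟨hZ0, hZc, hZn⟩ := hvec q z Z hzK hZ
    have hsum1 : ∀ i, Y i + Z i = 1 := by
      intro i
      have h1 := congrFun hadd i
      rw [Pi.add_apply, hY i, hZ i] at h1
      exact_mod_cast h1
    have hkey : ∀ (Y' Z' : Fin n → ℤ), (∀ i, 0 ≤ Y' i) → (∀ i, 0 ≤ Z' i) →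
        (∀ i, Y' i + Z' i = 1) → (∀ i : Fin n, (i:ℕ) < n - 1 → a i * Y' lst ≤ d * Y' i) →
        Y' lst = 1 → ∀ i, Z' i = 0 := by
      intro Y' Z' hY' hZ' hs hc hl i
      by_cases hi : (i:ℕ) < n - 1
      · have h1 := hc i hi
        rw [hl, mul_one] at h1
        have h2 : 0 < Y' i := by
          by_contra h
          push_neg at h
          have h3 : d * Y' i ≤ 0 := mul_nonpos_of_nonneg_of_nonpos (by omega) h
          have h4 := (ha i hi).1
          linarith
        have h5 := hs i
        have h6 := hZ' i
        omega
      · have h7 : i = lst := by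
          apply Fin.ext
          have := i.isLt
          omega
        rw [h7]
        have := hs lst
        omega
    have hor : Y lst = 1 ∨ Z lst = 1 := by
      have := hsum1 lst
      have := hY0
      have := hZ0
      omega
    rcases hor with h | h
    · right
      funext i
      have h8 := hkey Y Z hYn hZn hsum1 hYc h i
      rw [Pi.zero_apply, hZ i, h8]
      norm_num
    · left
      funext i
      have h8 := hkey Z Y hZn hYn (fun i => by have := hsum1 i; omega) hZc h i
      rw [Pi.zero_apply, hY i, h8]
      norm_num
  refine ⟨hmem1, hatom, ?_⟩
  -- part 3
  intro hmem
  rw [Set.mem_add] at hmem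
  obtain ⟨y, hy, z, hz, hyz⟩ := hmem
  have hyC : y ∈ C := by
    rw [hC]
    simp only [Set.mem_iUnion, Set.mem_inter_iff]
    exact ⟨n - 2, by omega, hy.1, hy.2⟩
  have hzC : z ∈ C := by
    rw [hC]
    simp only [Set.mem_iUnion, Set.mem_inter_iff]
    refine ⟨1, le_refl 1, ?_, hz.2⟩
    rw [Nat.cast_one, one_smul]
    exact hz.1
  have hg1 : (∑ j ∈ F, (1:ℝ)) + ((1 - (A:ℝ))/(d:ℝ)) * 1 = ((n:ℝ)-1) + (1-(A:ℝ))/(d:ℝ) := by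
    rw [Finset.sum_const, nsmul_eq_mul, mul_one, mul_one, hcard]
  rcases hatom y z hyC hzC hyz with h | h
  · -- y = 0, so z = 𝟏 ∈ K, but g 𝟏 > 1
    have hz1 : z = fun _ => (1:ℝ) := by
      rw [h] at hyz
      simpa using hyz
    have hgle := hSsub _ 1 hgS hglin z hz.1
    rw [hz1] at hgle
    simp only at hgle
    rw [hg1] at hgle
    have hge : (-1:ℝ) ≤ (1 - (A:ℝ))/(d:ℝ) := by
      rw [le_div_iff₀ hdpos]
      linarith
    linarith
  · -- z = 0, so y = 𝟏 ∈ (n-2)K, but g 𝟏 > n-2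
    have hy1 : y = fun _ => (1:ℝ) := by
      rw [h] at hyz
      simpa using hyz
    have hgle := hble _ 1 hgS hglin (n - 2) y hy.1
    rw [hy1] at hgle
    simp only at hgle
    rw [hg1, mul_one, Nat.cast_sub (by omega : 2 ≤ n)] at hgle
    have hle2 : (1 - (A:ℝ))/(d:ℝ) ≤ -1 := by
      push_cast at hgle
      linarith
    rw [div_le_iff₀ hdpos] at hle2
    linarith
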